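/- For every quaternion q and integer j ≥ 2, the 4-dimensional Laplacian applied to the monomial power q ↦ q^j gives Δ(q^j) = −2 j(j−1) Q_{j−2}(q,q̄), where Q_s are the quaternionic Appell polynomials; moreover Δ(q^0) = Δ(q^1) = 0. -/

import Mathlib

open Quaternion Real MeasureTheory

noncomputable section

/-- The quaternion imaginary unit `i`. -/
def qi : ℍ[ℝ] := ⟨0,1,0,0⟩
/-- The quaternion imaginary unit `j`. -/
def qj : ℍ[ℝ] := ⟨0,0,1,0⟩
/-- The quaternion imaginary unit `k`. -/
def qk : ℍ[ℝ] := ⟨0,0,0,1⟩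

/-- Directional (partial) derivative of `f : ℍ → ℍ` at `q` in direction `v`. -/
def pd (v : ℍ[ℝ]) (f : ℍ[ℝ] → ℍ[ℝ]) (q : ℍ[ℝ]) : ℍ[ℝ] := fderiv ℝ f q v

/-- The Cauchy–Fueter operator `D = ∂_{x₀} + i∂_{x₁} + j∂_{x₂} + k∂_{x₃}`. -/
def Dop (f : ℍ[ℝ] → ℍ[ℝ]) (q : ℍ[ℝ]) : ℍ[ℝ] :=
  pd 1 f q + qi * pd qi f q + qj * pd qj f q + qk * pd qk f q

/-- The conjugate Cauchy–Fueter operator `D̄ = ∂_{x₀} - i∂_{x₁} - j∂_{x₂} - k∂_{x₃}`. -/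
def Dbar (f : ℍ[ℝ] → ℍ[ℝ]) (q : ℍ[ℝ]) : ℍ[ℝ] :=
  pd 1 f q - qi * pd qi f q - qj * pd qj f q - qk * pd qk f q

/-- The 4-dimensional Laplacian `Δ = ∂²_{x₀} + ∂²_{x₁} + ∂²_{x₂} + ∂²_{x₃}`. -/
def qlap (f : ℍ[ℝ] → ℍ[ℝ]) (q : ℍ[ℝ]) : ℍ[ℝ] :=
  pd 1 (pd 1 f) q + pd qi (pd qi f) q + pd qj (pd qj f) q + pd qk (pd qk f) q

/-- The quaternionic Appell polynomials
`Q_k(q,q̄) = Σ_{j=0}^k (2(k-j+1)/((k+1)(k+2))) q^{k-j} q̄^j`. -/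
def Qa (k : ℕ) (q : ℍ[ℝ]) : ℍ[ℝ] :=
  ∑ j ∈ Finset.range (k+1),
    ((2*((k:ℝ)-j+1))/(((k:ℝ)+1)*((k:ℝ)+2))) • (q^(k-j) * (star q)^j)

/-- The generalized Appell polyanalytic polynomials `M_{k,s}(q,q̄) = x₀^k Q_s(q,q̄)`,
where `x₀ = Re q`. -/
def Ma (k s : ℕ) (q : ℍ[ℝ]) : ℍ[ℝ] := q.re ^ k • Qa s q

/-! ### Auxiliary lemmas -/

/-- The derivative of `p ↦ p^n` as a continuous linear map. -/
def Lmap (n : ℕ) (q : ℍ[ℝ]) : ℍ[ℝ] →L[ℝ] ℍ[ℝ] :=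
  ∑ i ∈ Finset.range n,
    ContinuousLinearMap.mulLeftRight ℝ ℍ[ℝ] (q^i) (q^(n-1-i))

lemma Lmap_apply (n : ℕ) (q v : ℍ[ℝ]) :
    Lmap n q v = ∑ i ∈ Finset.range n, q^i * v * q^(n-1-i) := by
  simp [Lmap, ContinuousLinearMap.mulLeftRight_apply]

lemma hasFDerivAt_qpow (n : ℕ) (q : ℍ[ℝ]) :
    HasFDerivAt (fun p : ℍ[ℝ] => p ^ n) (Lmap n q) q := by
  induction n with
  | zero => simpa [Lmap] using hasFDerivAt_const (1 : ℍ[ℝ]) q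
  | succ n ih =>
      have h := ih.fun_mul' (hasFDerivAt_id q)
      have e : (fun p : ℍ[ℝ] => p ^ n * id p) = fun p : ℍ[ℝ] => p ^ (n+1) := by
        funext p; rw [id, ← pow_succ]
      rw [e] at h
      have he : Lmap (n+1) q
          = q ^ n • ContinuousLinearMap.id ℝ ℍ[ℝ] + (Lmap n q).smulRight (id q) := by
        refine ContinuousLinearMap.ext fun v => ?_
        simp only [Lmap_apply, ContinuousLinearMap.add_apply, ContinuousLinearMap.smul_apply,
          ContinuousLinearMap.smulRight_apply, ContinuousLinearMap.coe_id', id_eq, smul_eq_mul]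
        rw [Finset.sum_range_succ, Finset.sum_mul, add_comm]
        congr 1
        · simp
        · exact Finset.sum_congr rfl fun i hi => by
            rw [mul_assoc (q^i * v), ← pow_succ]
            congr 2
            simp only [Finset.mem_range] at hi
            omega
      rw [he]; exact h.congr_fderiv (ContinuousLinearMap.ext fun w => by simp)

lemma pd_qpow (n : ℕ) (v : ℍ[ℝ]) :
    pd v (fun p => p^n) = fun p => ∑ i ∈ Finset.range n, p^i * (v * p^(n-1-i)) := by
  funext p
  rw [pd, (hasFDerivAt_qpow n p).fderiv, Lmap_apply]
  exact Finset.sum_congr rfl fun i _ => (mul_assoc _ _ _)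

lemma pd2_qpow (n : ℕ) (v q : ℍ[ℝ]) :
    pd v (pd v (fun p => p^n)) q =
      ∑ i ∈ Finset.range n,
        ((∑ t ∈ Finset.range i, q^t * v * q^(i-1-t)) * (v * q^(n-1-i))
          + q^i * (v * ∑ b ∈ Finset.range (n-1-i), q^b * v * q^(n-1-i-1-b))) := by
  rw [pd_qpow]
  have hd : HasFDerivAt (fun p : ℍ[ℝ] => ∑ i ∈ Finset.range n, p^i * (v * p^(n-1-i)))
      (∑ i ∈ Finset.range n,
        (q^i • (v • Lmap (n-1-i) q) + (Lmap i q).smulRight (v * q^(n-1-i)))) q :=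
    (HasFDerivAt.fun_sum fun i _ =>
      (hasFDerivAt_qpow i q).fun_mul' ((hasFDerivAt_qpow (n-1-i) q).const_mul v)).congr_fderiv
        (Finset.sum_congr rfl fun i _ => ContinuousLinearMap.ext fun w => by simp)
  rw [pd, hd.fderiv, ContinuousLinearMap.sum_apply]
  refine Finset.sum_congr rfl fun i _ => ?_
  simp only [ContinuousLinearMap.add_apply, ContinuousLinearMap.smul_apply,
    ContinuousLinearMap.smulRight_apply, smul_eq_mul, Lmap_apply]
  rw [add_comm]

lemma sandwich (x : ℍ[ℝ]) :
    1*x*1 + qi*x*qi + qj*x*qj + qk*x*qk = (-2:ℝ) • star x := by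
  ext <;> simp [Quaternion.re_mul, Quaternion.imI_mul, Quaternion.imJ_mul,
    Quaternion.imK_mul] <;> simp [qi, qj, qk] <;> ring

lemma sand1 (a x c : ℍ[ℝ]) :
    (a*1*x)*(1*c) + (a*qi*x)*(qi*c) + (a*qj*x)*(qj*c) + (a*qk*x)*(qk*c)
      = (-2:ℝ) • (a * star x * c) := by
  have h : (a*1*x)*(1*c) + (a*qi*x)*(qi*c) + (a*qj*x)*(qj*c) + (a*qk*x)*(qk*c)
      = a * (1*x*1 + qi*x*qi + qj*x*qj + qk*x*qk) * c := by noncomm_ring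
  rw [h, sandwich, mul_smul_comm, smul_mul_assoc]

lemma sand2 (a x c : ℍ[ℝ]) :
    a*(1*(x*1*c)) + a*(qi*(x*qi*c)) + a*(qj*(x*qj*c)) + a*(qk*(x*qk*c))
      = (-2:ℝ) • (a * star x * c) := by
  have h : a*(1*(x*1*c)) + a*(qi*(x*qi*c)) + a*(qj*(x*qj*c)) + a*(qk*(x*qk*c))
      = a * (1*x*1 + qi*x*qi + qj*x*qj + qk*x*qk) * c := by noncomm_ring
  rw [h, sandwich, mul_smul_comm, smul_mul_assoc]

lemma commq (q : ℍ[ℝ]) : Commute q (star q) := by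
  unfold Commute SemiconjBy
  rw [Quaternion.self_mul_star, Quaternion.star_mul_self]

lemma pow_shuffle (q : ℍ[ℝ]) (a m c : ℕ) :
    q^a * star q ^ m * q^c = q^(a+c) * star q ^ m := by
  rw [mul_assoc, ((commq q).symm.pow_pow m c), ← mul_assoc, ← pow_add]

lemma cnt (N : ℕ) (F : ℕ → ℍ[ℝ]) :
    ∑ i ∈ Finset.range N, ∑ t ∈ Finset.range i, F t
      = ∑ m ∈ Finset.range N, (N-1-m) • F m := by
  induction N with
  | zero => simp
  | succ N ih =>
      rw [Finset.sum_range_succ, ih, Finset.sum_range_succ]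
      have h : ∀ m ∈ Finset.range N, (N+1-1-m) • F m = (N-1-m) • F m + F m := by
        intro m hm
        simp only [Finset.mem_range] at hm
        have e : N+1-1-m = (N-1-m) + 1 := by omega
        rw [e, add_smul, one_smul]
      rw [Finset.sum_congr rfl h, Finset.sum_add_distrib]
      simp [add_assoc]

lemma qlap_qpow (n : ℕ) (q : ℍ[ℝ]) :
    qlap (fun p => p^n) q =
      ∑ i ∈ Finset.range n,
        (∑ t ∈ Finset.range i, (-2:ℝ) • (q^t * star q ^ (i-1-t) * q^(n-1-i))
          + ∑ b ∈ Finset.range (n-1-i), (-2:ℝ) • (q^i * star q ^ b * q^(n-1-i-1-b))) := by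
  rw [qlap, pd2_qpow n 1 q, pd2_qpow n qi q, pd2_qpow n qj q, pd2_qpow n qk q,
    ← Finset.sum_add_distrib, ← Finset.sum_add_distrib, ← Finset.sum_add_distrib]
  refine Finset.sum_congr rfl fun i _ => ?_
  have habel : ∀ A1 B1 A2 B2 A3 B3 A4 B4 : ℍ[ℝ],
      (A1+B1)+(A2+B2)+(A3+B3)+(A4+B4) = (A1+A2+A3+A4)+(B1+B2+B3+B4) := by
    intros; abel
  rw [habel]
  congr 1
  · rw [Finset.sum_mul, Finset.sum_mul, Finset.sum_mul, Finset.sum_mul,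
      ← Finset.sum_add_distrib, ← Finset.sum_add_distrib, ← Finset.sum_add_distrib]
    exact Finset.sum_congr rfl fun t _ =>
      (sand1 (q^t) (q^(i-1-t)) (q^(n-1-i))).trans (by rw [star_pow])
  · simp only [Finset.mul_sum]
    rw [← Finset.sum_add_distrib, ← Finset.sum_add_distrib, ← Finset.sum_add_distrib]
    exact Finset.sum_congr rfl fun b _ =>
      (sand2 (q^i) (q^b) (q^(n-1-i-1-b))).trans (by rw [star_pow])

/-- For every quaternion `q` and `j ≥ 2`, `Δ(q^j) = −2 j(j−1) Q_{j−2}(q,q̄)`;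
moreover `Δ(q^0) = Δ(q^1) = 0`. -/
theorem laplacian_monomial :
    (∀ j : ℕ, 2 ≤ j → ∀ q : ℍ[ℝ],
        qlap (fun p => p^j) q = (-2 * (j:ℝ) * ((j:ℝ) - 1)) • Qa (j-2) q) ∧
    (∀ q : ℍ[ℝ], qlap (fun p => p^0) q = 0 ∧ qlap (fun p => p^1) q = 0) := by
  constructor
  · intro j hj q
    obtain ⟨N, rfl⟩ : ∃ N, j = N + 2 := ⟨j - 2, by omega⟩
    set F : ℕ → ℍ[ℝ] := fun m => q^(N-m) * star q ^ m with hF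
    have key : qlap (fun p => p^(N+2)) q =
        ∑ i ∈ Finset.range (N+2), (∑ t ∈ Finset.range i, (-2:ℝ) • F t
          + ∑ b ∈ Finset.range (N+1-i), (-2:ℝ) • F b) := by
      rw [qlap_qpow]
      refine Finset.sum_congr rfl fun i hi => ?_
      simp only [Finset.mem_range] at hi
      congr 1
      · calc ∑ t ∈ Finset.range i, (-2:ℝ) • (q^t * star q ^ (i-1-t) * q^(N+2-1-i))
            = ∑ t ∈ Finset.range i, (-2:ℝ) • F (i-1-t) := by
              refine Finset.sum_congr rfl fun t ht => ?_
              simp only [Finset.mem_range] at ht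
              rw [pow_shuffle, hF]
              have e : t + (N+2-1-i) = N - (i-1-t) := by omega
              rw [e]
          _ = ∑ t ∈ Finset.range i, (-2:ℝ) • F t :=
              Finset.sum_range_reflect (fun t => (-2:ℝ) • F t) i
      · have er : N+2-1-i = N+1-i := by omega
        rw [er]
        refine Finset.sum_congr rfl fun b hb => ?_
        simp only [Finset.mem_range] at hb
        rw [pow_shuffle, hF]
        have e : i + (N+1-i-1-b) = N - b := by omega
        rw [e]
    rw [key, Finset.sum_add_distrib]
    have h2 : ∑ i ∈ Finset.range (N+2), ∑ b ∈ Finset.range (N+1-i), (-2:ℝ) • F b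
        = ∑ i ∈ Finset.range (N+2), ∑ t ∈ Finset.range i, (-2:ℝ) • F t := by
      calc ∑ i ∈ Finset.range (N+2), ∑ b ∈ Finset.range (N+1-i), (-2:ℝ) • F b
          = ∑ i ∈ Finset.range (N+2), ∑ t ∈ Finset.range (N+2-1-i), (-2:ℝ) • F t := by
            refine Finset.sum_congr rfl fun i hi => ?_
            have e : N+1-i = N+2-1-i := by omega
            rw [e]
        _ = ∑ i ∈ Finset.range (N+2), ∑ t ∈ Finset.range i, (-2:ℝ) • F t :=
            Finset.sum_range_reflect (fun i => ∑ t ∈ Finset.range i, (-2:ℝ) • F t) (N+2)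
    rw [h2, cnt (N+2) (fun t => (-2:ℝ) • F t), ← Finset.sum_add_distrib,
      Finset.sum_range_succ]
    have hzero : (N+2-1-(N+1)) • ((-2:ℝ) • F (N+1)) + (N+2-1-(N+1)) • ((-2:ℝ) • F (N+1))
        = 0 := by
      have e : N+2-1-(N+1) = 0 := by omega
      rw [e]; simp
    rw [hzero, add_zero, Qa, Finset.smul_sum]
    have eN : N + 2 - 2 = N := by omega
    rw [eN] at *
    refine Finset.sum_congr rfl fun m hm => ?_
    simp only [Finset.mem_range] at hm
    have e1 : N+2-1-m = N+1-m := by omega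
    rw [e1, ← two_nsmul, smul_smul, ← Nat.cast_smul_eq_nsmul ℝ, smul_smul, smul_smul, hF]
    congr 1
    push_cast [Nat.cast_sub (show m ≤ N+1 by omega)]
    have hne1 : ((N:ℝ) + 1) ≠ 0 := by positivity
    have hne2 : ((N:ℝ) + 2) ≠ 0 := by positivity
    field_simp
    ring
  · intro q
    have h0 : ∀ v : ℍ[ℝ], pd v (fun p : ℍ[ℝ] => p^0) = fun _ => (0:ℍ[ℝ]) := fun v => by
      rw [pd_qpow]; simp
    have h1 : ∀ v : ℍ[ℝ], pd v (fun p : ℍ[ℝ] => p^1) = fun _ => v := fun v => by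
      rw [pd_qpow]; simp
    constructor
    · rw [qlap, h0, h0, h0, h0]
      simp [pd, fderiv_const]
    · rw [qlap, h1, h1, h1, h1]
      simp [pd, fderiv_const]
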